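/- For every integer n ≥ 0 and every real x > 0, the function i_n is differentiable at x with derivative i_n'(x) = (n/x)·i_n(x) + i_{n+1}(x). -/

import Mathlib

open Real Finset

/-- Modified spherical Bessel function of the second kind `k_n`, explicit closed form. -/
noncomputable def kBes (n : ℕ) (x : ℝ) : ℝ :=
  (Real.exp (-x) / x) *
    ∑ l ∈ Finset.range (n + 1),
      (Nat.factorial (n + l) : ℝ) /
        ((Nat.factorial l : ℝ) * (Nat.factorial (n - l) : ℝ) * (2 * x) ^ l)

/-- Modified spherical Bessel function of the first kind `i_n`, explicit closed form. -/
noncomputable def iBes (n : ℕ) (x : ℝ) : ℝ :=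
  (1 / (2 * x)) *
    (Real.exp x *
        ∑ l ∈ Finset.range (n + 1),
          (-1 : ℝ) ^ l * (Nat.factorial (n + l) : ℝ) /
            ((Nat.factorial l : ℝ) * (Nat.factorial (n - l) : ℝ) * (2 * x) ^ l)
      + (-1 : ℝ) ^ (n + 1) * Real.exp (-x) *
        ∑ l ∈ Finset.range (n + 1),
          (Nat.factorial (n + l) : ℝ) /
            ((Nat.factorial l : ℝ) * (Nat.factorial (n - l) : ℝ) * (2 * x) ^ l))

/-- Binomial-type coefficient `(n+l)!/(l!(n-l)!)` as a real number. -/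
noncomputable def cc (n l : ℕ) : ℝ :=
  (Nat.factorial (n + l) : ℝ) / (Nat.factorial l * Nat.factorial (n - l))

lemma cc_zero (n : ℕ) : cc n 0 = 1 := by
  simp [cc, Nat.factorial, div_self, Nat.cast_ne_zero.2 (Nat.factorial_ne_zero n)]

lemma cc_rec (n l : ℕ) (h : l < n) :
    cc (n + 1) (l + 1) = cc n (l + 1) + 2 * ((n : ℝ) + l + 1) * cc n l := by
  obtain ⟨k, rfl⟩ : ∃ k, n = l + 1 + k := ⟨n - l - 1, by omega⟩
  unfold cc
  have h1 : l + 1 + k + 1 - (l + 1) = k + 1 := by omega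
  have h2 : l + 1 + k - (l + 1) = k := by omega
  have h3 : l + 1 + k - l = k + 1 := by omega
  have h4 : l + 1 + k + 1 + (l + 1) = (l + 1 + k + l + 1) + 1 := by omega
  have h5 : l + 1 + k + (l + 1) = (l + 1 + k + l) + 1 := by omega
  rw [h1, h2, h3, h4, h5, Nat.factorial_succ, Nat.factorial_succ,
    Nat.factorial_succ l, Nat.factorial_succ k]
  have e1 : (Nat.factorial l : ℝ) ≠ 0 := Nat.cast_ne_zero.2 (Nat.factorial_ne_zero l)
  have e2 : (Nat.factorial k : ℝ) ≠ 0 := Nat.cast_ne_zero.2 (Nat.factorial_ne_zero k)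
  have e3 : (Nat.factorial (l+1+k+l) : ℝ) ≠ 0 := Nat.cast_ne_zero.2 (Nat.factorial_ne_zero _)
  push_cast
  field_simp
  ring

lemma cc_top (n : ℕ) : cc (n + 1) (n + 1) = 2 * (2 * (n : ℝ) + 1) * cc n n := by
  unfold cc
  rw [Nat.sub_self, Nat.sub_self]
  have h4 : n + 1 + (n + 1) = (n + n + 1) + 1 := by omega
  rw [h4, Nat.factorial_succ, Nat.factorial_succ (n+n), Nat.factorial_succ n]
  have e1 : (Nat.factorial n : ℝ) ≠ 0 := Nat.cast_ne_zero.2 (Nat.factorial_ne_zero n)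
  push_cast
  field_simp
  ring

/-- The polynomial-in-`1/x` part of `iBes`, with sign parameter `s`. -/
noncomputable def gg (n : ℕ) (s x : ℝ) : ℝ :=
  ∑ l ∈ range (n+1), s^l * cc n l / 2^(l+1) * x ^ (-(l:ℤ)-1)

/-- Formal derivative of `gg`. -/
noncomputable def gg' (n : ℕ) (s x : ℝ) : ℝ :=
  ∑ l ∈ range (n+1), s^l * cc n l / 2^(l+1) * (((-(l:ℤ)-1 : ℤ) : ℝ) * x ^ (-(l:ℤ)-2))

lemma gg_hasDerivAt (n : ℕ) (s x : ℝ) (hx : x ≠ 0) :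
    HasDerivAt (fun y => gg n s y) (gg' n s x) x := by
  unfold gg gg'
  apply HasDerivAt.fun_sum
  intro l _
  have h := (hasDerivAt_zpow (-(l:ℤ)-1) x (Or.inl hx)).const_mul (s^l * cc n l / 2^(l+1))
  have he : (-(l:ℤ)-1) - 1 = -(l:ℤ)-2 := by ring
  rw [he] at h
  simpa [mul_assoc] using h

lemma gg_succ (n : ℕ) (s x : ℝ) (hx : x ≠ 0) :
    gg (n+1) s x = gg n s x + s * (((n:ℝ) / x) * gg n s x - gg' n s x) := by
  have hpow : ∀ l : ℕ, x ^ (-(l:ℤ)-2) = x⁻¹ * x ^ (-(l:ℤ)-1) := by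
    intro l
    rw [← zpow_neg_one, ← zpow_add₀ hx]
    ring_nf
  have hR : s * (((n:ℝ) / x) * gg n s x - gg' n s x)
      = ∑ l ∈ range (n+1), s^(l+1) * (2*((n:ℝ)+l+1) * cc n l) / 2^(l+1+1) * x ^ (-(l:ℤ)-2) := by
    unfold gg gg'
    rw [Finset.mul_sum, ← Finset.sum_sub_distrib, Finset.mul_sum]
    refine Finset.sum_congr rfl fun l _ => ?_
    rw [hpow l]
    push_cast
    field_simp
    ring
  rw [hR]
  unfold gg
  rw [Finset.sum_range_succ'
    (fun l => s^l * cc (n+1) l / 2^(l+1) * x ^ (-(l:ℤ)-1)) (n+1)]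
  rw [Finset.sum_range_succ'
    (fun l => s^l * cc n l / 2^(l+1) * x ^ (-(l:ℤ)-1)) n]
  rw [Finset.sum_range_succ
    (fun l => s^(l+1) * cc (n+1) (l+1) / 2^(l+1+1) * x ^ (-((l+1:ℕ):ℤ)-1)) n]
  rw [Finset.sum_range_succ
    (fun l => s^(l+1) * (2*((n:ℝ)+l+1) * cc n l) / 2^(l+1+1) * x ^ (-(l:ℤ)-2)) n]
  have htop : s^(n+1) * cc (n+1) (n+1) / 2^(n+1+1) * x ^ (-((n+1:ℕ):ℤ)-1)
      = s^(n+1) * (2*((n:ℝ)+n+1) * cc n n) / 2^(n+1+1) * x ^ (-(n:ℤ)-2) := by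
    have he : (-((n+1:ℕ):ℤ)-1) = -(n:ℤ)-2 := by push_cast; ring
    rw [he, cc_top]
    ring
  rw [htop]
  have hmid : ∑ l ∈ range n, s^(l+1) * cc (n+1) (l+1) / 2^(l+1+1) * x ^ (-((l+1:ℕ):ℤ)-1)
      = ∑ l ∈ range n, (s^(l+1) * cc n (l+1) / 2^(l+1+1) * x ^ (-((l+1:ℕ):ℤ)-1)
          + s^(l+1) * (2*((n:ℝ)+l+1) * cc n l) / 2^(l+1+1) * x ^ (-(l:ℤ)-2)) := by
    refine Finset.sum_congr rfl fun l hl => ?_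
    have he : (-((l+1:ℕ):ℤ)-1) = -(l:ℤ)-2 := by push_cast; ring
    rw [he, cc_rec n l (Finset.mem_range.1 hl)]
    ring
  rw [hmid, Finset.sum_add_distrib, cc_zero, cc_zero]
  ring

lemma zp (x : ℝ) (l : ℕ) : x ^ (-(l:ℤ)-1) = (x^(l+1))⁻¹ := by
  rw [show (-(l:ℤ)-1) = -((l+1:ℕ):ℤ) by push_cast; ring, zpow_neg, zpow_natCast]

lemma iBes_eq (n : ℕ) {x : ℝ} (hx : x ≠ 0) :
    iBes n x = Real.exp x * gg n (-1) x + (-1:ℝ)^(n+1) * Real.exp (-x) * gg n 1 x := by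
  unfold iBes gg
  rw [mul_add]
  simp only [Finset.mul_sum]
  congr 1
  · refine Finset.sum_congr rfl fun l _ => ?_
    unfold cc
    rw [zp x l]
    have e1 : (Nat.factorial l : ℝ) ≠ 0 := Nat.cast_ne_zero.2 (Nat.factorial_ne_zero l)
    have e2 : (Nat.factorial (n-l) : ℝ) ≠ 0 := Nat.cast_ne_zero.2 (Nat.factorial_ne_zero _)
    field_simp
    ring
  · refine Finset.sum_congr rfl fun l _ => ?_
    unfold cc
    rw [zp x l]
    have e1 : (Nat.factorial l : ℝ) ≠ 0 := Nat.cast_ne_zero.2 (Nat.factorial_ne_zero l)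
    have e2 : (Nat.factorial (n-l) : ℝ) ≠ 0 := Nat.cast_ne_zero.2 (Nat.factorial_ne_zero _)
    field_simp
    ring

/-- For every integer `n ≥ 0` and every real `x > 0`, `i_n` is differentiable at `x`
with derivative `i_n'(x) = (n/x)·i_n(x) + i_{n+1}(x)`. -/
theorem iBes_hasDerivAt (n : ℕ) (x : ℝ) (hx : 0 < x) :
    HasDerivAt (iBes n) ((n : ℝ) / x * iBes n x + iBes (n + 1) x) x := by
  have hx' : x ≠ 0 := ne_of_gt hx
  have h2d : HasDerivAt (fun y : ℝ => Real.exp (-y)) (-Real.exp (-x)) x := by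
    simpa using (hasDerivAt_neg x).exp
  have h1 := (Real.hasDerivAt_exp x).mul (gg_hasDerivAt n (-1) x hx')
  have h2 := (h2d.const_mul ((-1:ℝ)^(n+1))).mul (gg_hasDerivAt n 1 x hx')
  have hF := h1.add h2
  have hev : (fun y => Real.exp y * gg n (-1) y
        + (-1:ℝ)^(n+1) * Real.exp (-y) * gg n 1 y) =ᶠ[nhds x] iBes n := by
    filter_upwards [eventually_ne_nhds hx'] with y hy
    exact (iBes_eq n hy).symm
  have hD := hF.congr_of_eventuallyEq hev.symm
  refine HasDerivAt.congr_deriv hD ?_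
  rw [iBes_eq n hx', iBes_eq (n+1) hx', gg_succ n (-1) x hx', gg_succ n 1 x hx']
  ring
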